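/- Let g̃ be a finite-dimensional simple Lie algebra over ℂ and let a, b ∈ g̃ be such that for every k ≥ 0 and all x₁, …, x_k ∈ g̃ one has ad(a)∘ad(x₁)∘⋯∘ad(x_k)∘ad(b) = ad(b)∘ad(x₁)∘⋯∘ad(x_k)∘ad(a) as endomorphisms of g̃ (for k = 0 this reads ad(a)∘ad(b) = ad(b)∘ad(a)). Then a and b are linearly dependent over ℂ. -/

import Mathlib

/-
Formalization of statements from:
E. Heintze, "Real forms and finite order automorphisms of affine Kac-Moody
algebras - an outline of a new approach".

Conventions:
* The field `𝔽` (which is `ℝ` or `ℂ`) is formalized as a type `𝕜` with `[RCLike 𝕜]`.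
* "`g` is compact if `𝔽 = ℝ`" is formalized as the hypothesis that if `𝕜` is real
  (i.e. `RCLike.I = (0 : 𝕜)`), then the Killing form of `g` is negative definite
  (`RCLike.re` is the identity in the real case).
* Since the finite-dimensional space `g` carries no distinguished norm, smoothness
  of a curve `u : ℝ → g` is formalized weakly: `t ↦ ℓ (u t)` is smooth for every
  linear functional `ℓ : g →ₗ[𝕜] 𝕜`.  In finite dimension this is equivalent to
  smoothness in the usual sense.  Similarly, the derivative of a curve in `g` is
  defined coordinate-wise with respect to a basis (this is basis-independent), and
  a smooth family of automorphisms `t ↦ φ_t` is a map `Φ : ℝ → (g ≃ₗ⁅𝕜⁆ g)` such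
  that `t ↦ Φ t x` is smooth for every `x : g`.
-/

open scoped Real

noncomputable section

/-- **Statement 17.** In a finite-dimensional simple complex Lie algebra, if
`ad a ∘ ad x₁ ∘ ⋯ ∘ ad x_k ∘ ad b = ad b ∘ ad x₁ ∘ ⋯ ∘ ad x_k ∘ ad a` for all
`k ≥ 0` and all `x₁, …, x_k` (the case `k = 0` being `ad a ∘ ad b = ad b ∘ ad a`),
then `a` and `b` are linearly dependent over `ℂ`. -/
theorem ad_intertwining_implies_linearly_dependent
    (g : Type) [LieRing g] [LieAlgebra ℂ g] [Module.Finite ℂ g] [LieAlgebra.IsSimple ℂ g]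
    (a b : g)
    (h : ∀ l : List g,
      LieAlgebra.ad ℂ g a * (l.map fun x => LieAlgebra.ad ℂ g x).prod * LieAlgebra.ad ℂ g b =
      LieAlgebra.ad ℂ g b * (l.map fun x => LieAlgebra.ad ℂ g x).prod * LieAlgebra.ad ℂ g a) :
    ¬ LinearIndependent ℂ ![a, b] := by
  intro hli
  classical
  -- injectivity of ad
  have hadinj : ∀ x : g, LieAlgebra.ad ℂ g x = 0 → x = 0 := by
    intro x hx
    have hxc : x ∈ LieAlgebra.center ℂ g := by
      rw [LieAlgebra.center, LieModule.mem_maxTrivSubmodule]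
      intro y
      have : ⁅x, y⁆ = 0 := by rw [← LieAlgebra.ad_apply (R := ℂ), hx]; rfl
      rw [← lie_skew, this, neg_zero]
    rw [LieAlgebra.center_eq_bot ℂ g, LieSubmodule.mem_bot] at hxc
    exact hxc
  have hnt : Nontrivial g := by
    by_contra hnt
    rw [not_nontrivial_iff_subsingleton] at hnt
    exact LieAlgebra.IsSimple.non_abelian (R := ℂ) (L := g) ⟨fun x y => Subsingleton.elim _ _⟩
  have hb : b ≠ 0 := by
    have := hli.ne_zero 1
    simpa using this
  have hB : LieAlgebra.ad ℂ g b ≠ 0 := fun h0 => hb (hadinj b h0)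
  obtain ⟨w, hw⟩ : ∃ w : g, LieAlgebra.ad ℂ g b w ≠ 0 := by
    by_contra h0
    push_neg at h0
    exact hB (LinearMap.ext h0)
  -- the span of products of ad's
  set W : Submodule ℂ (Module.End ℂ g) :=
    Submodule.span ℂ {p : Module.End ℂ g | ∃ l : List g,
      (l.map fun x => LieAlgebra.ad ℂ g x).prod = p} with hWdef
  have hone : (1 : Module.End ℂ g) ∈ W := Submodule.subset_span ⟨[], by simp⟩
  have hadm : ∀ x : g, LieAlgebra.ad ℂ g x ∈ W := fun x => Submodule.subset_span ⟨[x], by simp⟩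
  have hleft : ∀ (l : List g), ∀ u ∈ W, (l.map fun x => LieAlgebra.ad ℂ g x).prod * u ∈ W := by
    intro l u hu
    induction hu using Submodule.span_induction with
    | mem p hp =>
      obtain ⟨l', rfl⟩ := hp
      exact Submodule.subset_span ⟨l ++ l', by simp⟩
    | zero => simp only [mul_zero]; exact W.zero_mem
    | add u v _ _ h1 h2 => rw [mul_add]; exact W.add_mem h1 h2
    | smul c u _ h1 => rw [mul_smul_comm]; exact W.smul_mem c h1
  have hmul : ∀ u ∈ W, ∀ v ∈ W, u * v ∈ W := by
    intro u hu
    induction hu using Submodule.span_induction with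
    | mem p hp =>
      obtain ⟨l, rfl⟩ := hp
      exact fun v hv => hleft l v hv
    | zero => intro v hv; rw [zero_mul]; exact W.zero_mem
    | add u u' _ _ h1 h2 => intro v hv; rw [add_mul]; exact W.add_mem (h1 v hv) (h2 v hv)
    | smul c u _ h1 => intro v hv; rw [smul_mul_assoc]; exact W.smul_mem c (h1 v hv)
  have hkey : ∀ u ∈ W,
      LieAlgebra.ad ℂ g a * u * LieAlgebra.ad ℂ g b =
      LieAlgebra.ad ℂ g b * u * LieAlgebra.ad ℂ g a := by
    intro u hu
    induction hu using Submodule.span_induction with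
    | mem p hp => obtain ⟨l, rfl⟩ := hp; exact h l
    | zero => simp
    | add u u' _ _ h1 h2 => rw [mul_add, add_mul, h1, h2, mul_add, add_mul]
    | smul c u _ h1 => rw [mul_smul_comm, smul_mul_assoc, h1, mul_smul_comm, smul_mul_assoc]
  -- transitivity
  have htrans : ∀ v : g, v ≠ 0 → ∀ y : g, ∃ u ∈ W, u v = y := by
    intro v hv y
    let I : LieIdeal ℂ g :=
      { W.map (LinearMap.applyₗ v) with
        lie_mem := by
          rintro x m hm
          change m ∈ W.map (LinearMap.applyₗ v) at hm
          change ⁅x, m⁆ ∈ W.map (LinearMap.applyₗ v)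
          simp only [Submodule.mem_map] at hm ⊢
          obtain ⟨u, hu, rfl⟩ := hm
          refine ⟨LieAlgebra.ad ℂ g x * u, hmul _ (hadm x) _ hu, ?_⟩
          simp [Module.End.mul_apply, LieAlgebra.ad_apply] }
    have hmem : ∀ z : g, z ∈ I ↔ z ∈ W.map (LinearMap.applyₗ v) := fun z => Iff.rfl
    rcases LieAlgebra.IsSimple.eq_bot_or_eq_top I with hI | hI
    · exfalso
      have hvI : v ∈ I := by
        rw [hmem]
        exact ⟨1, hone, rfl⟩
      rw [hI, LieSubmodule.mem_bot] at hvI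
      exact hv hvI
    · have hyI : y ∈ I := by rw [hI]; trivial
      rw [hmem, Submodule.mem_map] at hyI
      obtain ⟨u, hu, huv⟩ := hyI
      exact ⟨u, hu, huv⟩
  -- the factored map Φ
  let e : ↥W →ₗ[ℂ] g := (LinearMap.applyₗ (LieAlgebra.ad ℂ g b w)).comp W.subtype
  let f : ↥W →ₗ[ℂ] g := (LinearMap.applyₗ (LieAlgebra.ad ℂ g a w)).comp W.subtype
  have heapp : ∀ u : W, e u = (u : Module.End ℂ g) (LieAlgebra.ad ℂ g b w) := fun u => rfl
  have hfapp : ∀ u : W, f u = (u : Module.End ℂ g) (LieAlgebra.ad ℂ g a w) := fun u => rfl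
  have hesurj : Function.Surjective e := by
    intro y
    obtain ⟨u, hu, huv⟩ := htrans (LieAlgebra.ad ℂ g b w) hw y
    exact ⟨⟨u, hu⟩, huv⟩
  have hker : LinearMap.ker e ≤ LinearMap.ker f := by
    rintro ⟨u, hu⟩ hue
    rw [LinearMap.mem_ker] at hue ⊢
    rw [heapp] at hue
    rw [hfapp]
    by_contra huf
    have hBzero : LieAlgebra.ad ℂ g b w = 0 := by
      obtain ⟨u', hu', hy⟩ := htrans (u (LieAlgebra.ad ℂ g a w)) huf w
      have h2 := hkey (u' * u) (hmul _ hu' _ hu)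
      have h3 := congrArg (fun T : Module.End ℂ g => T w) h2
      simp only [Module.End.mul_apply] at h3
      rw [hue] at h3
      simp only [map_zero] at h3
      rw [hy] at h3
      exact h3.symm
    exact hw hBzero
  let q := LinearMap.quotKerEquivOfSurjective e hesurj
  let Φ : g →ₗ[ℂ] g := ((LinearMap.ker e).liftQ f hker).comp (q.symm : g →ₗ[ℂ] _)
  have hΦe : ∀ u : W, Φ (e u) = f u := by
    intro u
    have hq : q ((LinearMap.ker e).mkQ u) = e u := rfl
    have hqs : q.symm (e u) = (LinearMap.ker e).mkQ u := by
      rw [← hq, LinearEquiv.symm_apply_apply]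
    show ((LinearMap.ker e).liftQ f hker) (q.symm (e u)) = f u
    rw [hqs, Submodule.mkQ_apply, Submodule.liftQ_apply]
  have hcomm : ∀ u ∈ W, ∀ v : g, Φ (u v) = u (Φ v) := by
    intro u hu v
    obtain ⟨u', hu', rfl⟩ := htrans (LieAlgebra.ad ℂ g b w) hw v
    have h1 : Φ (u' (LieAlgebra.ad ℂ g b w)) = u' (LieAlgebra.ad ℂ g a w) := hΦe ⟨u', hu'⟩
    have h2 : Φ ((u * u') (LieAlgebra.ad ℂ g b w)) = (u * u') (LieAlgebra.ad ℂ g a w) :=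
      hΦe ⟨u * u', hmul _ hu _ hu'⟩
    simp only [Module.End.mul_apply] at h2
    rw [h2, h1]
  -- Φ is a scalar
  have : FiniteDimensional ℂ g := ‹Module.Finite ℂ g›
  obtain ⟨μ, hμ⟩ := Module.End.exists_eigenvalue Φ
  obtain ⟨v₀, hv₀⟩ := hμ.exists_hasEigenvector
  have hΦeq : ∀ v : g, Φ v = μ • v := by
    let J : LieIdeal ℂ g :=
      { LinearMap.ker (Φ - μ • (1 : Module.End ℂ g)) with
        lie_mem := by
          intro x m hm
          have hm' : Φ m = μ • m := by
            have h0 : (Φ - μ • (1 : Module.End ℂ g)) m = 0 := hm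
            rw [LinearMap.sub_apply, LinearMap.smul_apply, Module.End.one_apply,
              sub_eq_zero] at h0
            exact h0
          have h2 : Φ ⁅x, m⁆ = μ • ⁅x, m⁆ := by
            have h3 : Φ (LieAlgebra.ad ℂ g x m) = LieAlgebra.ad ℂ g x (Φ m) :=
              hcomm _ (hadm x) m
            rw [LieAlgebra.ad_apply] at h3
            rw [h3, hm', map_smul, LieAlgebra.ad_apply]
          show ⁅x, m⁆ ∈ LinearMap.ker (Φ - μ • (1 : Module.End ℂ g))
          rw [LinearMap.mem_ker, LinearMap.sub_apply, LinearMap.smul_apply,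
            Module.End.one_apply, h2, sub_self] }
    have hmemJ : ∀ z : g, z ∈ J ↔ Φ z = μ • z := by
      intro z
      show z ∈ LinearMap.ker (Φ - μ • (1 : Module.End ℂ g)) ↔ _
      simp [LinearMap.mem_ker, sub_eq_zero]
    rcases LieAlgebra.IsSimple.eq_bot_or_eq_top J with hJ | hJ
    · exfalso
      have : v₀ ∈ J := (hmemJ v₀).2 hv₀.apply_eq_smul
      rw [hJ, LieSubmodule.mem_bot] at this
      exact hv₀.2 this
    · intro v
      exact (hmemJ v).1 (by rw [hJ]; trivial)
  -- conclude: ad a = μ • ad b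
  have hab : a = μ • b := by
    have hadeq : LieAlgebra.ad ℂ g a = μ • LieAlgebra.ad ℂ g b := by
      ext v
      obtain ⟨u, hu, rfl⟩ := htrans (LieAlgebra.ad ℂ g b w) hw v
      have h1 := hkey u hu
      have h2 := congrArg (fun T : Module.End ℂ g => T w) h1
      simp only [Module.End.mul_apply] at h2
      have h3 : Φ (LieAlgebra.ad ℂ g b (u (LieAlgebra.ad ℂ g b w))) =
          LieAlgebra.ad ℂ g b (Φ (u (LieAlgebra.ad ℂ g b w))) := hcomm _ (hadm b) _
      have h4 : Φ (u (LieAlgebra.ad ℂ g b w)) = u (LieAlgebra.ad ℂ g a w) := hΦe ⟨u, hu⟩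
      rw [hΦeq, h4] at h3
      rw [LinearMap.smul_apply, h2]
      exact h3.symm
    have : LieAlgebra.ad ℂ g (a - μ • b) = 0 := by
      rw [map_sub, map_smul, hadeq, sub_self]
    have := hadinj _ this
    rwa [sub_eq_zero] at this
  rw [LinearIndependent.pair_iff] at hli
  have := (hli 1 (-μ) (by rw [one_smul, neg_smul, ← hab, add_neg_cancel])).1
  exact one_ne_zero this
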